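/- There is an absolute constant C > 0 such that for every z in the upper half-plane ℍ with Im z ≥ 1/10 and every X > 0, the set {γ ∈ SL₂(ℤ) : u(z, γ·z) < X} is finite with cardinality at most C·(√(X(X+1))·Im z + X + 1), and the set {γ ∈ SL₂(ℤ) : u(z, γ·(−z̄)) < X} is finite with cardinality at most C·(√(X(X+1))·Im z + X + 1), where −z̄ denotes the reflection of z across the imaginary axis and γ acts by Möbius transformations. -/

import Mathlib

open scoped MatrixGroups

/-- The point-pair invariant `u(z₁,z₂) = |z₁-z₂|² / (4 Im z₁ Im z₂)` on the upper half-plane. -/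
noncomputable def ptPair (z₁ z₂ : UpperHalfPlane) : ℝ :=
  ‖(z₁ : ℂ) - (z₂ : ℂ)‖^2 / (4 * z₁.im * z₂.im)

/-- The reflection `z ↦ -z̄` across the imaginary axis. -/
noncomputable def reflUHP (z : UpperHalfPlane) : UpperHalfPlane :=
  ⟨-(starRingEnd ℂ) (z : ℂ), by simpa using z.2⟩

namespace Stmt5Aux

open UpperHalfPlane Matrix

noncomputable def Dd (γ : SL(2,ℤ)) (w : ℍ) : ℂ := (γ 1 0 : ℝ) * w + (γ 1 1 : ℝ)
noncomputable def Nn (γ : SL(2,ℤ)) (w : ℍ) : ℂ := (γ 0 0 : ℝ) * w + (γ 0 1 : ℝ)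

lemma coe_smul' (γ : SL(2,ℤ)) (w : ℍ) : ((γ • w : ℍ):ℂ) = Nn γ w / Dd γ w := by
  rw [UpperHalfPlane.specialLinearGroup_apply]; simp [Nn, Dd]

lemma im_smul' (γ : SL(2,ℤ)) (w : ℍ) : (γ • w).im = w.im / Complex.normSq (Dd γ w) := by
  rw [ModularGroup.im_smul_eq_div_normSq, ModularGroup.denom_apply]; norm_num [Dd]

lemma Dd_ne (γ : SL(2,ℤ)) (w : ℍ) : Dd γ w ≠ 0 := by
  have := UpperHalfPlane.denom_ne_zero (γ : GL(2,ℝ)⁺) w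
  change denom (Matrix.SpecialLinearGroup.toGL ((Matrix.SpecialLinearGroup.map (Int.castRingHom ℝ)) γ)) w ≠ 0 at this
  rw [ModularGroup.denom_apply] at this
  simpa [Dd] using this

lemma Dd_im (γ : SL(2,ℤ)) (w : ℍ) : (Dd γ w).im = (γ 1 0 : ℝ) * w.im := by
  simp [Dd, UpperHalfPlane.coe_im]

lemma Dd_re (γ : SL(2,ℤ)) (w : ℍ) : (Dd γ w).re = (γ 1 0 : ℝ) * w.re + (γ 1 1 : ℝ) := by
  simp [Dd, UpperHalfPlane.coe_re]

lemma Nn_im (γ : SL(2,ℤ)) (w : ℍ) : (Nn γ w).im = (γ 0 0 : ℝ) * w.im := by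
  simp [Nn, UpperHalfPlane.coe_im]

lemma Nn_re (γ : SL(2,ℤ)) (w : ℍ) : (Nn γ w).re = (γ 0 0 : ℝ) * w.re + (γ 0 1 : ℝ) := by
  simp [Nn, UpperHalfPlane.coe_re]

lemma det_entries (γ : SL(2,ℤ)) : γ 0 0 * γ 1 1 - γ 0 1 * γ 1 0 = 1 := by
  have := γ.2; rwa [Matrix.det_fin_two] at this

lemma ptPair_eq (z w : ℍ) (hw : w.im = z.im) (γ : SL(2,ℤ)) :
    ptPair z (γ • w) =
      (‖((z:ℂ) * Dd γ w - Nn γ w)‖)^2 / (4 * z.im^2) := by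
  have hD := Dd_ne γ w
  have hnsq : Complex.normSq (Dd γ w) ≠ 0 := (Complex.normSq_pos.2 hD).ne'
  have hy : z.im ≠ 0 := ne_of_gt z.im_pos
  have h1 : (z:ℂ) - ((γ • w : ℍ):ℂ) = ((z:ℂ) * Dd γ w - Nn γ w) / Dd γ w := by
    rw [coe_smul']; field_simp
  rw [ptPair, h1, norm_div, div_pow, im_smul', hw, Complex.sq_norm, Complex.sq_norm, sq]
  field_simp

lemma mem_iff (z w : ℍ) (hw : w.im = z.im) (X : ℝ) (hX : 0 < X) (γ : SL(2,ℤ)) :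
    ptPair z (γ • w) < X ↔
      ‖((z:ℂ) * Dd γ w - Nn γ w)‖ < 2 * Real.sqrt X * z.im := by
  rw [ptPair_eq z w hw]
  have hy := z.im_pos
  have hs : (0:ℝ) < Real.sqrt X := Real.sqrt_pos.2 hX
  have hsq : Real.sqrt X ^ 2 = X := Real.sq_sqrt hX.le
  have hA : (0:ℝ) ≤ ‖((z:ℂ) * Dd γ w - Nn γ w)‖ := norm_nonneg _
  constructor
  · intro h
    rw [div_lt_iff₀ (by positivity)] at h
    nlinarith [hA, mul_pos (mul_pos (by norm_num : (0:ℝ)<2) hs) hy]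
  · intro h
    rw [div_lt_iff₀ (by positivity)]
    nlinarith

lemma row_bound (z w : ℍ) (hw : w.im = z.im) (X : ℝ) (hX : 0 < X) (γ : SL(2,ℤ))
    (h : ptPair z (γ • w) < X) :
    ‖(Dd γ w)‖ ≤ Real.sqrt X + Real.sqrt (X+1) := by
  set t := Complex.normSq (Dd γ w) with ht_def
  have ht : 0 < t := Complex.normSq_pos.2 (Dd_ne γ w)
  have hy := z.im_pos
  have hvim : (γ • w).im = z.im / t := by rw [im_smul', hw]
  have him : ((z:ℂ) - ((γ • w : ℍ):ℂ)).im = z.im - z.im / t := by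
    rw [Complex.sub_im, UpperHalfPlane.coe_im, UpperHalfPlane.coe_im, hvim]
  have habs : (z.im - z.im/t)^2 ≤ (‖((z:ℂ) - ((γ • w : ℍ):ℂ))‖)^2 := by
    rw [← him, Complex.sq_norm, Complex.normSq_apply]
    nlinarith [sq_nonneg ((z:ℂ) - ((γ • w : ℍ):ℂ)).re]
  have hkey : (t - 1)^2 / (4*t) < X := by
    have h2 : (z.im - z.im/t)^2 / (4 * z.im * (z.im/t)) < X := by
      calc (z.im - z.im/t)^2 / (4 * z.im * (z.im/t))
          ≤ (‖((z:ℂ) - ((γ • w : ℍ):ℂ))‖)^2 / (4 * z.im * (z.im/t)) := by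
            gcongr
        _ < X := by rw [← hvim]; exact h
    have heq : (z.im - z.im/t)^2 / (4 * z.im * (z.im/t)) = (t-1)^2/(4*t) := by
      field_simp
    linarith [heq ▸ h2]
  have ha : Real.sqrt X ^ 2 = X := Real.sq_sqrt hX.le
  have hb : Real.sqrt (X+1) ^ 2 = X + 1 := Real.sq_sqrt (by linarith)
  have ha0 : 0 ≤ Real.sqrt X := Real.sqrt_nonneg _
  have hb0 : 0 ≤ Real.sqrt (X+1) := Real.sqrt_nonneg _
  have hkey' : (t-1)^2 < 4*t*X := by
    rw [div_lt_iff₀ (by positivity)] at hkey; linarith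
  set s := Real.sqrt X * Real.sqrt (X+1) with hs_def
  have hs2 : s^2 = X*(X+1) := by rw [hs_def, mul_pow, ha, hb]
  have hs_pos : 0 < s := by
    apply mul_pos (Real.sqrt_pos.2 hX) (Real.sqrt_pos.2 (by linarith))
  have htle : t ≤ (Real.sqrt X + Real.sqrt (X+1))^2 := by
    have hexp : (Real.sqrt X + Real.sqrt (X+1))^2 = 2*X + 1 + 2*s := by
      rw [add_sq, ha, hb, hs_def]; ring
    rw [hexp]
    nlinarith [hkey', hs2, hs_pos, ht, sq_nonneg (t - 2*X - 1 - 2*s)]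
  calc ‖(Dd γ w)‖ = Real.sqrt t := by rw [Complex.norm_def]
    _ ≤ Real.sqrt ((Real.sqrt X + Real.sqrt (X+1))^2) := Real.sqrt_le_sqrt htle
    _ = Real.sqrt X + Real.sqrt (X+1) := Real.sqrt_sq (by positivity)

lemma low_bound (z w : ℍ) (hz : 1/10 ≤ z.im) (hw : w.im = z.im) (γ : SL(2,ℤ)) :
    1/10 ≤ ‖(Dd γ w)‖ := by
  by_cases hc : γ 1 0 = 0
  · have hdet := det_entries γ
    rw [hc] at hdet
    have hd : γ 1 1 * γ 1 1 = 1 := by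
      rcases Int.eq_one_or_neg_one_of_mul_eq_one' (by linarith : γ 0 0 * γ 1 1 = 1) with
        ⟨_, h⟩ | ⟨_, h⟩ <;> rw [h] <;> norm_num
    have habs : ‖(Dd γ w)‖ = |(γ 1 1 : ℝ)| := by
      rw [show Dd γ w = ((γ 1 1 : ℝ) : ℂ) by rw [Dd, hc]; push_cast; ring]
      rw [Complex.norm_real, Real.norm_eq_abs]
    have h1 : |(γ 1 1 : ℤ)| = 1 := by
      rcases Int.eq_one_or_neg_one_of_mul_eq_one' (by linarith : γ 1 1 * γ 1 1 = 1) with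
        ⟨h, _⟩ | ⟨h, _⟩ <;> rw [h] <;> norm_num
    rw [habs, ← Int.cast_abs, h1]
    norm_num
  · have h1 : (1:ℝ) ≤ |(γ 1 0 : ℝ)| := by
      rw [← Int.cast_abs]
      exact_mod_cast Int.one_le_abs (by exact_mod_cast hc)
    calc (1:ℝ)/10 ≤ z.im := hz
      _ = 1 * w.im := by rw [hw, one_mul]
      _ ≤ |(γ 1 0 : ℝ)| * w.im := by
          apply mul_le_mul_of_nonneg_right h1 w.im_pos.le
      _ = |(Dd γ w).im| := by
          rw [Dd_im, abs_mul, abs_of_pos w.im_pos]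
      _ ≤ ‖(Dd γ w)‖ := Complex.abs_im_le_norm _

lemma fiber_struct (γ γ₀ : SL(2,ℤ)) (h10 : γ 1 0 = γ₀ 1 0) (h11 : γ 1 1 = γ₀ 1 1) :
    ∃ n : ℤ, γ 0 0 = γ₀ 0 0 + n * γ₀ 1 0 ∧ γ 0 1 = γ₀ 0 1 + n * γ₀ 1 1 := by
  have hdet := det_entries γ
  have hdet0 := det_entries γ₀
  rw [h10, h11] at hdet
  set a := γ 0 0; set b := γ 0 1; set a₀ := γ₀ 0 0; set b₀ := γ₀ 0 1
  set c := γ₀ 1 0; set d := γ₀ 1 1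
  have hrel : (a - a₀) * d = (b - b₀) * c := by ring_nf; nlinarith [hdet, hdet0]
  by_cases hc : c = 0
  · have hd1 : a₀ * d = 1 := by rw [hc] at hdet0; linarith [hdet0]
    have hd1' : a * d = 1 := by rw [hc] at hdet; linarith [hdet]
    have hdd : d * d = 1 := by
      rcases Int.eq_one_or_neg_one_of_mul_eq_one' hd1 with ⟨_, h⟩ | ⟨_, h⟩ <;>
        rw [h] <;> norm_num
    have ha : a = a₀ := by
      have : a * d * d = a₀ * d * d := by rw [hd1, hd1']
      rw [mul_assoc, mul_assoc, hdd] at this; simpa using this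
    refine ⟨(b - b₀) * d, by rw [hc]; linarith, ?_⟩
    have : (b - b₀) * d * d = (b-b₀) * 1 := by rw [mul_assoc, hdd]
    linarith [this]
  · have hcop : IsCoprime c d := ⟨-b₀, a₀, by linarith [hdet0]⟩
    have hdvd : c ∣ (a - a₀) := by
      have : c ∣ (a - a₀) * d := ⟨b - b₀, by linarith [hrel]⟩
      exact hcop.dvd_of_dvd_mul_right this
    obtain ⟨n, hn⟩ := hdvd
    refine ⟨n, by linarith [hn], ?_⟩
    have h2 : (b - b₀) * c = n * d * c := by rw [← hrel, hn]; ring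
    have := mul_right_cancel₀ hc h2
    linarith

lemma fiber_val (γ γ₀ : SL(2,ℤ)) (h10 : γ 1 0 = γ₀ 1 0) (h11 : γ 1 1 = γ₀ 1 1) :
    ∃ n : ℤ, (if γ₀ 1 0 = 0 then (γ 0 1 - γ₀ 0 1) * γ₀ 1 1
        else (γ 0 0 - γ₀ 0 0) / γ₀ 1 0) = n
      ∧ γ 0 0 = γ₀ 0 0 + n * γ₀ 1 0 ∧ γ 0 1 = γ₀ 0 1 + n * γ₀ 1 1 := by
  obtain ⟨n, hn1, hn2⟩ := fiber_struct γ γ₀ h10 h11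
  refine ⟨n, ?_, hn1, hn2⟩
  split_ifs with hc
  · have hdet0 := det_entries γ₀
    rw [hc] at hdet0
    have hdd : γ₀ 1 1 * γ₀ 1 1 = 1 := by
      rcases Int.eq_one_or_neg_one_of_mul_eq_one'
        (by linarith : γ₀ 0 0 * γ₀ 1 1 = 1) with ⟨_, h⟩ | ⟨_, h⟩ <;> rw [h] <;> norm_num
    rw [hn2]
    have : (γ₀ 0 1 + n * γ₀ 1 1 - γ₀ 0 1) * γ₀ 1 1 = n * (γ₀ 1 1 * γ₀ 1 1) := by ring
    rw [this, hdd, mul_one]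
  · rw [hn1, add_sub_cancel_left]
    exact Int.mul_ediv_cancel n hc

lemma entries_inj : Function.Injective
    (fun γ : SL(2,ℤ) => (γ 0 0, γ 0 1, γ 1 0, γ 1 1)) := by
  intro γ γ' h
  simp only [Prod.mk.injEq] at h
  ext i j
  fin_cases i <;> fin_cases j <;> simp [h.1, h.2.1, h.2.2.1, h.2.2.2]

lemma icc_card (K : ℤ) (hK : 0 ≤ K) : ((Finset.Icc (-K) K).card : ℝ) = 2*(K:ℝ)+1 := by
  rw [Int.card_Icc, show K + 1 - (-K) = 2*K+1 by ring]
  have h : ((2*K+1).toNat : ℤ) = 2*K+1 := Int.toNat_of_nonneg (by linarith)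
  have h2 : (((2*K+1).toNat : ℤ) : ℝ) = ((2*K+1 : ℤ) : ℝ) := by rw [h]
  push_cast at h2 ⊢
  linarith

lemma dyadic_term (u : ℝ) (hu : 1 ≤ u) :
    (20*(2*u/10)+1)*(2*(2*u/10)+2)*(10/u) ≤ 16*u+104 := by
  have hu0 : 0 < u := lt_of_lt_of_le one_pos hu
  have h1 : (20*(2*u/10)+1)*(2*(2*u/10)+2)*(10/u) = (4*u+1)*(4*u+20)/u := by
    field_simp; ring
  rw [h1, div_le_iff₀ hu0]
  nlinarith

lemma nat_succ_le_two_pow (J : ℕ) : ((J:ℝ)+1) ≤ 2^J := by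
  exact_mod_cast Nat.succ_le_of_lt (Nat.lt_two_pow_self)

end Stmt5Aux

namespace Stmt5Aux

open UpperHalfPlane Matrix

set_option maxHeartbeats 2000000 in
lemma main_count (z w : ℍ) (hz : 1/10 ≤ z.im) (hw : w.im = z.im) (X : ℝ) (hX : 0 < X) :
    {γ : SL(2,ℤ) | ptPair z (γ • w) < X}.Finite ∧
      (({γ : SL(2,ℤ) | ptPair z (γ • w) < X}).ncard : ℝ)
        ≤ 30000 * (Real.sqrt (X*(X+1)) * z.im + X + 1) := by
  have hy0 : 0 < z.im := z.im_pos
  have hw10 : 1/10 ≤ w.im := by rw [hw]; exact hz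
  have hw0 : 0 < w.im := w.im_pos
  set sX := Real.sqrt X with hsX_def
  set sX1 := Real.sqrt (X+1) with hsX1_def
  have hsX0 : 0 < sX := Real.sqrt_pos.2 hX
  have hsX10 : 1 ≤ sX1 := by
    have h : Real.sqrt 1 ≤ sX1 := Real.sqrt_le_sqrt (by linarith)
    rwa [Real.sqrt_one] at h
  have hsXsq : sX^2 = X := Real.sq_sqrt hX.le
  have hsX1sq : sX1^2 = X+1 := Real.sq_sqrt (by linarith)
  have hsXle : sX ≤ sX1 := Real.sqrt_le_sqrt (by linarith)
  set ρ := sX + sX1 with hρ_def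
  have hρ1 : 1 ≤ ρ := by rw [hρ_def]; linarith
  have hρ0 : 0 < ρ := lt_of_lt_of_le one_pos hρ1
  set E := {γ : SL(2,ℤ) | ptPair z (γ • w) < X} with hE_def
  have hmemE : ∀ γ : SL(2,ℤ), γ ∈ E ↔
      ‖((z:ℂ) * Dd γ w - Nn γ w)‖ < 2 * sX * z.im :=
    fun γ => mem_iff z w hw X hX γ
  have hrow : ∀ γ ∈ E, ‖(Dd γ w)‖ ≤ ρ :=
    fun γ hγ => row_bound z w hw X hX γ hγ
  have hlow : ∀ γ : SL(2,ℤ), 1/10 ≤ ‖(Dd γ w)‖ :=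
    fun γ => low_bound z w hz hw γ
  -- |c| * Im w ≤ |Dd|,  |a| * Im w ≤ |Nn|
  have hcDd : ∀ γ : SL(2,ℤ), (|γ 1 0| : ℝ) * w.im ≤ ‖(Dd γ w)‖ := by
    intro γ
    calc |(γ 1 0:ℝ)| * w.im = |(Dd γ w).im| := by
          rw [Dd_im, abs_mul, abs_of_pos hw0]
      _ ≤ ‖(Dd γ w)‖ := Complex.abs_im_le_norm _
  have haNn : ∀ γ : SL(2,ℤ), (|γ 0 0| : ℝ) * w.im ≤ ‖(Nn γ w)‖ := by
    intro γ
    calc |(γ 0 0:ℝ)| * w.im = |(Nn γ w).im| := by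
          rw [Nn_im, abs_mul, abs_of_pos hw0]
      _ ≤ ‖(Nn γ w)‖ := Complex.abs_im_le_norm _
  set M := ‖(z:ℂ)‖ * ρ + 2 * sX * z.im with hM_def
  have hM0 : 0 < M := by
    have : 0 < ‖(z:ℂ)‖ := by
      exact norm_pos_iff.mpr (UpperHalfPlane.ne_zero z)
    positivity
  have hNb : ∀ γ ∈ E, ‖(Nn γ w)‖ ≤ M := by
    intro γ hγ
    have h2 := norm_sub_le ((z:ℂ) * Dd γ w) ((z:ℂ) * Dd γ w - Nn γ w)
    rw [sub_sub_cancel] at h2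
    have h3 : ‖(Nn γ w)‖ ≤ ‖((z:ℂ) * Dd γ w)‖
        + ‖((z:ℂ) * Dd γ w - Nn γ w)‖ := by
      simpa using h2
    have h4 : ‖((z:ℂ) * Dd γ w)‖ ≤ ‖(z:ℂ)‖ * ρ := by
      rw [norm_mul]
      exact mul_le_mul_of_nonneg_left (hrow γ hγ) (norm_nonneg _)
    have h5 := ((hmemE γ).1 hγ).le
    rw [hM_def]
    linarith
  -- entry bounds for γ ∈ E
  have hten : ∀ u v : ℝ, u * w.im ≤ v → 0 ≤ u → u ≤ 10 * v := by
    intro u v h hu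
    nlinarith [mul_le_mul_of_nonneg_left hw10 hu]
  have hcb : ∀ γ ∈ E, |(γ 1 0:ℝ)| ≤ 10*ρ := by
    intro γ hγ
    exact hten _ _ (le_trans (hcDd γ) (hrow γ hγ)) (by positivity)
  have hab : ∀ γ ∈ E, |(γ 0 0:ℝ)| ≤ 10*M := by
    intro γ hγ
    exact hten _ _ (le_trans (haNn γ) (hNb γ hγ)) (by positivity)
  have hdb : ∀ γ ∈ E, |(γ 1 1:ℝ)| ≤ ρ + 10*ρ*|w.re| := by
    intro γ hγ
    have h1 : |(Dd γ w).re| ≤ ρ := le_trans (Complex.abs_re_le_norm _) (hrow γ hγ)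
    rw [Dd_re] at h1
    have h2 : |(γ 1 1:ℝ)| = |((γ 1 0 : ℝ) * w.re + (γ 1 1:ℝ)) - (γ 1 0 : ℝ) * w.re| := by
      congr 1; ring
    rw [h2]
    calc |((γ 1 0 : ℝ) * w.re + (γ 1 1:ℝ)) - (γ 1 0 : ℝ) * w.re|
        ≤ |(γ 1 0 : ℝ) * w.re + (γ 1 1:ℝ)| + |(γ 1 0 : ℝ) * w.re| := abs_sub _ _
      _ ≤ ρ + 10*ρ*|w.re| := by
          have := hcb γ hγ
          have h3 : |(γ 1 0 : ℝ) * w.re| = |(γ 1 0:ℝ)| * |w.re| := abs_mul _ _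
          rw [h3]
          have h4 : |(γ 1 0:ℝ)| * |w.re| ≤ 10*ρ*|w.re| :=
            mul_le_mul_of_nonneg_right this (abs_nonneg _)
          linarith
  have hbb : ∀ γ ∈ E, |(γ 0 1:ℝ)| ≤ M + 10*M*|w.re| := by
    intro γ hγ
    have h1 : |(Nn γ w).re| ≤ M := le_trans (Complex.abs_re_le_norm _) (hNb γ hγ)
    rw [Nn_re] at h1
    have h2 : |(γ 0 1:ℝ)| = |((γ 0 0 : ℝ) * w.re + (γ 0 1:ℝ)) - (γ 0 0 : ℝ) * w.re| := by
      congr 1; ring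
    rw [h2]
    calc |((γ 0 0 : ℝ) * w.re + (γ 0 1:ℝ)) - (γ 0 0 : ℝ) * w.re|
        ≤ |(γ 0 0 : ℝ) * w.re + (γ 0 1:ℝ)| + |(γ 0 0 : ℝ) * w.re| := abs_sub _ _
      _ ≤ M + 10*M*|w.re| := by
          have := hab γ hγ
          have h3 : |(γ 0 0 : ℝ) * w.re| = |(γ 0 0:ℝ)| * |w.re| := abs_mul _ _
          rw [h3]
          have h4 : |(γ 0 0:ℝ)| * |w.re| ≤ 10*M*|w.re| :=
            mul_le_mul_of_nonneg_right this (abs_nonneg _)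
          linarith
  -- finiteness
  have key_int : ∀ (k : ℤ) (B : ℝ), |(k:ℝ)| ≤ B → k ∈ Set.Icc (-⌊B⌋) ⌊B⌋ := by
    intro k B hk
    have h1 : |k| ≤ ⌊B⌋ := Int.le_floor.2 (by rw [Int.cast_abs]; exact hk)
    exact ⟨by linarith [neg_abs_le k], by linarith [le_abs_self k]⟩
  have hfin : E.Finite := by
    apply Set.Finite.subset (Set.Finite.preimage (entries_inj.injOn)
      (((Set.finite_Icc (-⌊10*M⌋) ⌊10*M⌋).prod
        ((Set.finite_Icc (-⌊M + 10*M*|w.re|⌋) ⌊M + 10*M*|w.re|⌋).prod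
          ((Set.finite_Icc (-⌊10*ρ⌋) ⌊10*ρ⌋).prod
            (Set.finite_Icc (-⌊ρ + 10*ρ*|w.re|⌋) ⌊ρ + 10*ρ*|w.re|⌋))))))
    intro γ hγ
    simp only [Set.mem_preimage, Set.mem_prod]
    exact ⟨key_int _ _ (hab γ hγ), key_int _ _ (hbb γ hγ),
      key_int _ _ (hcb γ hγ), key_int _ _ (hdb γ hγ)⟩
  refine ⟨hfin, ?_⟩
  -- counting setup
  set Fs := hfin.toFinset with hFs_def
  have hFs_mem : ∀ γ, γ ∈ Fs ↔ γ ∈ E := fun γ => hfin.mem_toFinset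
  set rowmap : SL(2,ℤ) → ℤ × ℤ := fun γ => (γ 1 0, γ 1 1) with hrowmap_def
  set Pc : ℤ × ℤ → ℂ := fun r => ((r.1:ℝ):ℂ) * (w:ℂ) + ((r.2:ℝ):ℂ) with hPc_def
  have hPc_row : ∀ γ : SL(2,ℤ), Pc (rowmap γ) = Dd γ w := fun γ => rfl
  set R := Fs.image rowmap with hR_def
  have hRlow : ∀ r ∈ R, 1/10 ≤ ‖(Pc r)‖ ∧ ‖(Pc r)‖ ≤ ρ ∧
      |(r.1:ℝ)| * w.im ≤ ‖(Pc r)‖ := by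
    intro r hr
    obtain ⟨γ, hγ, rfl⟩ := Finset.mem_image.1 hr
    rw [hPc_row]
    exact ⟨hlow γ, hrow γ ((hFs_mem γ).1 hγ), hcDd γ⟩
  have hPc_re : ∀ r : ℤ×ℤ, (Pc r).re = (r.1:ℝ)*w.re + (r.2:ℝ) := by
    intro r; simp [hPc_def, UpperHalfPlane.coe_re]
  have hPc_pos : ∀ r ∈ R, 0 < ‖(Pc r)‖ := by
    intro r hr
    exact lt_of_lt_of_le (by norm_num) (hRlow r hr).1
  -- lattice count
  have hN : ∀ t : ℝ, 0 ≤ t →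
      ((R.filter (fun r => ‖(Pc r)‖ ≤ t)).card : ℝ) ≤ (20*t+1)*(2*t+2) := by
    intro t ht
    have hA1 : (0:ℤ) ≤ ⌊10*t⌋ := Int.floor_nonneg.2 (by linarith)
    have hA2 : (0:ℤ) ≤ ⌊t+1/2⌋ := Int.floor_nonneg.2 (by linarith)
    have hsub : ((R.filter (fun r => ‖(Pc r)‖ ≤ t)).card : ℕ) ≤
        ((Finset.Icc (-⌊10*t⌋) ⌊10*t⌋ ×ˢ Finset.Icc (-⌊t+1/2⌋) ⌊t+1/2⌋).card : ℕ) := by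
      apply Finset.card_le_card_of_injOn
        (fun r => (r.1, r.2 + round ((r.1:ℝ) * w.re)))
      · intro r hr
        obtain ⟨hrR, hrt⟩ := Finset.mem_filter.1 hr
        obtain ⟨h10p, hρb, hcy⟩ := hRlow r hrR
        have hc : |(r.1:ℝ)| ≤ 10*t := by
          have h1 : |(r.1:ℝ)| * w.im ≤ t := le_trans hcy hrt
          nlinarith [mul_le_mul_of_nonneg_left hw10 (by positivity : (0:ℝ) ≤ |(r.1:ℝ)|)]
        have hre : |(r.1:ℝ)*w.re + (r.2:ℝ)| ≤ t := by
          rw [← hPc_re]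
          exact le_trans (Complex.abs_re_le_norm _) hrt
        have hrnd : |((round ((r.1:ℝ)*w.re)):ℝ) - (r.1:ℝ)*w.re| ≤ 1/2 := by
          rw [abs_sub_comm]; exact abs_sub_round _
        have hd : |((r.2 + round ((r.1:ℝ) * w.re) : ℤ) : ℝ)| ≤ t + 1/2 := by
          push_cast
          calc |(r.2:ℝ) + (round ((r.1:ℝ)*w.re) : ℝ)|
              = |((r.1:ℝ)*w.re + (r.2:ℝ)) + (((round ((r.1:ℝ)*w.re)):ℝ) - (r.1:ℝ)*w.re)| := by
                congr 1; ring
            _ ≤ |(r.1:ℝ)*w.re + (r.2:ℝ)| + |((round ((r.1:ℝ)*w.re)):ℝ) - (r.1:ℝ)*w.re| :=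
                abs_add_le _ _
            _ ≤ t + 1/2 := by linarith
        rw [Finset.mem_coe, Finset.mem_product]
        exact ⟨Finset.mem_Icc.2 (key_int _ _ hc), Finset.mem_Icc.2 (key_int _ _ hd)⟩
      · intro r hr r' hr' heq
        simp only [Prod.mk.injEq] at heq
        obtain ⟨h1, h2⟩ := heq
        have : r.2 = r'.2 := by rw [h1] at h2; omega
        exact Prod.ext h1 this
    have hcards : ((Finset.Icc (-⌊10*t⌋) ⌊10*t⌋ ×ˢ
        Finset.Icc (-⌊t+1/2⌋) ⌊t+1/2⌋).card : ℝ) ≤ (20*t+1)*(2*t+2) := by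
      rw [Finset.card_product]
      push_cast
      rw [icc_card _ hA1, icc_card _ hA2]
      have f1 : ((⌊10*t⌋:ℤ):ℝ) ≤ 10*t := Int.floor_le _
      have f2 : ((⌊t+1/2⌋:ℤ):ℝ) ≤ t+1/2 := Int.floor_le _
      have g1 : (0:ℝ) ≤ ((⌊10*t⌋:ℤ):ℝ) := by exact_mod_cast hA1
      have g2 : (0:ℝ) ≤ ((⌊t+1/2⌋:ℤ):ℝ) := by exact_mod_cast hA2
      nlinarith
    calc ((R.filter (fun r => ‖(Pc r)‖ ≤ t)).card : ℝ)
        ≤ ((Finset.Icc (-⌊10*t⌋) ⌊10*t⌋ ×ˢ Finset.Icc (-⌊t+1/2⌋) ⌊t+1/2⌋).card : ℝ) := by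
          exact_mod_cast hsub
      _ ≤ (20*t+1)*(2*t+2) := hcards
  have hRcard : (R.card : ℝ) ≤ (20*ρ+1)*(2*ρ+2) := by
    have hfil : R.filter (fun r => ‖(Pc r)‖ ≤ ρ) = R :=
      Finset.filter_true_of_mem (fun r hr => (hRlow r hr).2.1)
    calc (R.card:ℝ) = ((R.filter (fun r => ‖(Pc r)‖ ≤ ρ)).card:ℝ) := by rw [hfil]
      _ ≤ _ := hN ρ hρ0.le
  -- fiber bound
  have hfiber : ∀ r ∈ R, ((Fs.filter (fun γ => rowmap γ = r)).card : ℝ) ≤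
      8*sX*z.im / ‖(Pc r)‖ + 1 := by
    intro r hr
    obtain ⟨γ₀, hγ₀, hγ₀r⟩ := Finset.mem_image.1 hr
    have habsPc := hPc_pos r hr
    set K : ℤ := ⌊4*sX*z.im / ‖(Pc r)‖⌋ with hK_def
    have hK0 : 0 ≤ K := Int.floor_nonneg.2 (by positivity)
    have hkey : ∀ γ ∈ Fs.filter (fun γ => rowmap γ = r), ∃ n : ℤ,
        (if γ₀ 1 0 = 0 then (γ 0 1 - γ₀ 0 1) * γ₀ 1 1
          else (γ 0 0 - γ₀ 0 0) / γ₀ 1 0) = n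
        ∧ γ 0 0 = γ₀ 0 0 + n * γ₀ 1 0 ∧ γ 0 1 = γ₀ 0 1 + n * γ₀ 1 1
        ∧ γ 1 0 = γ₀ 1 0 ∧ γ 1 1 = γ₀ 1 1 ∧ n ∈ Finset.Icc (-K) K := by
      intro γ hγ
      obtain ⟨hγFs, hγr⟩ := Finset.mem_filter.1 hγ
      have h10 : γ 1 0 = γ₀ 1 0 := by
        have := hγr.trans hγ₀r.symm
        exact congrArg Prod.fst this
      have h11 : γ 1 1 = γ₀ 1 1 := by
        have := hγr.trans hγ₀r.symm
        exact congrArg Prod.snd this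
      obtain ⟨n, hval, hn1, hn2⟩ := fiber_val γ γ₀ h10 h11
      refine ⟨n, hval, hn1, hn2, h10, h11, ?_⟩
      -- bound |n|
      have hDdγ : Dd γ w = Pc r := by rw [← hPc_row γ, hγr]
      have hDdγ₀ : Dd γ₀ w = Pc r := by rw [← hPc_row γ₀, hγ₀r]
      have hNrel : Nn γ w = Nn γ₀ w + (n:ℂ) * Pc r := by
        rw [← hDdγ₀, Nn, Nn, Dd, hn1, hn2]
        push_cast
        ring
      have hγE := (hmemE γ).1 ((hFs_mem γ).1 hγFs)
      have hγ₀E := (hmemE γ₀).1 ((hFs_mem γ₀).1 hγ₀)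
      rw [hDdγ] at hγE
      rw [hDdγ₀] at hγ₀E
      have hdiff : ‖((n:ℂ) * Pc r)‖ < 4 * sX * z.im := by
        have heq2 : (n:ℂ) * Pc r =
            ((z:ℂ)*Pc r - Nn γ₀ w) - ((z:ℂ)*Pc r - Nn γ w) := by
          rw [hNrel]; ring
        rw [heq2]
        calc ‖(((z:ℂ)*Pc r - Nn γ₀ w) - ((z:ℂ)*Pc r - Nn γ w))‖
            ≤ ‖((z:ℂ)*Pc r - Nn γ₀ w)‖ + ‖((z:ℂ)*Pc r - Nn γ w)‖ := by
              simpa using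
                norm_sub_le ((z:ℂ)*Pc r - Nn γ₀ w) ((z:ℂ)*Pc r - Nn γ w)
          _ < 4 * sX * z.im := by linarith
      have habs_n : |(n:ℝ)| * ‖(Pc r)‖ < 4*sX*z.im := by
        rw [norm_mul, Complex.norm_intCast] at hdiff
        exact hdiff
      have hn_le : |(n:ℝ)| ≤ 4*sX*z.im / ‖(Pc r)‖ := by
        rw [le_div_iff₀ habsPc]; linarith
      exact Finset.mem_Icc.2 (key_int _ _ hn_le)
    have hcard : (Fs.filter (fun γ => rowmap γ = r)).card ≤ (Finset.Icc (-K) K).card := by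
      apply Finset.card_le_card_of_injOn
        (fun γ => if γ₀ 1 0 = 0 then (γ 0 1 - γ₀ 0 1) * γ₀ 1 1
          else (γ 0 0 - γ₀ 0 0) / γ₀ 1 0)
      · intro γ hγ
        obtain ⟨n, hval, _, _, _, _, hmem⟩ := hkey γ hγ
        rw [Finset.mem_coe]; beta_reduce
        rw [hval]; exact hmem
      · intro γ hγ γ' hγ' heq
        obtain ⟨n, hval, hn1, hn2, h10, h11, _⟩ := hkey γ hγ
        obtain ⟨n', hval', hn1', hn2', h10', h11', _⟩ := hkey γ' hγ'
        have hnn : n = n' := by rw [← hval, ← hval']; exact heq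
        apply entries_inj
        simp only [Prod.mk.injEq]
        refine ⟨?_, ?_, ?_, ?_⟩
        · rw [hn1, hn1', hnn]
        · rw [hn2, hn2', hnn]
        · rw [h10, h10']
        · rw [h11, h11']
    calc ((Fs.filter (fun γ => rowmap γ = r)).card : ℝ)
        ≤ ((Finset.Icc (-K) K).card : ℝ) := by exact_mod_cast hcard
      _ = 2*(K:ℝ)+1 := icc_card K hK0
      _ ≤ 8*sX*z.im / ‖(Pc r)‖ + 1 := by
          have h8 : 8*sX*z.im / ‖(Pc r)‖
              = 2*(4*sX*z.im / ‖(Pc r)‖) := by ring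
          have h9 : (K:ℝ) ≤ 4*sX*z.im / ‖(Pc r)‖ := Int.floor_le _
          rw [h8]; linarith
  -- dyadic sum
  set idx : ℤ×ℤ → ℕ := fun r => Nat.log 2 ⌊10 * ‖(Pc r)‖⌋₊ with hidx_def
  set J : ℕ := Nat.log 2 ⌊10 * ρ⌋₊ with hJ_def
  have hfloor_ne : ∀ r ∈ R, ⌊10 * ‖(Pc r)‖⌋₊ ≠ 0 := by
    intro r hr
    have h1 : (1:ℝ) ≤ 10 * ‖(Pc r)‖ := by linarith [(hRlow r hr).1]
    have : (1:ℕ) ≤ ⌊10 * ‖(Pc r)‖⌋₊ := Nat.le_floor (by exact_mod_cast h1)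
    omega
  have hidx_mem : ∀ r ∈ R, idx r ∈ Finset.range (J+1) := by
    intro r hr
    rw [Finset.mem_range, Nat.lt_succ_iff]
    exact Nat.log_mono_right (Nat.floor_mono (by nlinarith [(hRlow r hr).2.1]))
  have h2J : ((2:ℝ))^J ≤ 10*ρ := by
    have hne : ⌊10*ρ⌋₊ ≠ 0 := by
      have : (1:ℕ) ≤ ⌊10*ρ⌋₊ := Nat.le_floor (by push_cast; linarith)
      omega
    have h1 : (2:ℕ)^J ≤ ⌊10*ρ⌋₊ := Nat.pow_log_le_self 2 hne
    calc ((2:ℝ))^J = ((2^J : ℕ):ℝ) := by push_cast; ring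
      _ ≤ (⌊10*ρ⌋₊ : ℝ) := by exact_mod_cast h1
      _ ≤ 10*ρ := Nat.floor_le (by positivity)
  have hidx_low : ∀ r ∈ R, (2:ℝ)^(idx r) ≤ 10 * ‖(Pc r)‖ := by
    intro r hr
    have h1 : (2:ℕ)^(idx r) ≤ ⌊10 * ‖(Pc r)‖⌋₊ :=
      Nat.pow_log_le_self 2 (hfloor_ne r hr)
    calc ((2:ℝ))^(idx r) = ((2^(idx r) : ℕ):ℝ) := by push_cast; ring
      _ ≤ (⌊10 * ‖(Pc r)‖⌋₊ : ℝ) := by exact_mod_cast h1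
      _ ≤ 10 * ‖(Pc r)‖ := Nat.floor_le (by positivity)
  have hidx_high : ∀ r ∈ R, 10 * ‖(Pc r)‖ < (2:ℝ)^(idx r + 1) := by
    intro r hr
    have h1 : ⌊10 * ‖(Pc r)‖⌋₊ < 2^(idx r + 1) :=
      Nat.lt_pow_succ_log_self (by norm_num) _
    have h2 : 10 * ‖(Pc r)‖ < (⌊10 * ‖(Pc r)‖⌋₊:ℝ) + 1 :=
      Nat.lt_floor_add_one _
    have h3 : (⌊10 * ‖(Pc r)‖⌋₊:ℝ) + 1 ≤ ((2^(idx r + 1) : ℕ):ℝ) := by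
      exact_mod_cast h1
    push_cast at h3
    linarith
  have hsum : ∑ r ∈ R, 1 / ‖(Pc r)‖ ≤ 1360 * ρ := by
    rw [← Finset.sum_fiberwise_of_maps_to hidx_mem (fun r => 1 / ‖(Pc r)‖)]
    have hterm : ∀ j ∈ Finset.range (J+1),
        (∑ r ∈ R.filter (fun r => idx r = j), 1 / ‖(Pc r)‖)
          ≤ 16*(2:ℝ)^j + 104 := by
      intro j _
      have hu1 : (1:ℝ) ≤ (2:ℝ)^j := one_le_pow₀ (by norm_num)
      have hu0 : (0:ℝ) < (2:ℝ)^j := by positivity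
      have hcardj : ((R.filter (fun r => idx r = j)).card : ℝ) ≤
          (20*((2:ℝ)^(j+1)/10)+1)*(2*((2:ℝ)^(j+1)/10)+2) := by
        have hsub : R.filter (fun r => idx r = j) ⊆
            R.filter (fun r => ‖(Pc r)‖ ≤ (2:ℝ)^(j+1)/10) := by
          intro r hr
          obtain ⟨hrR, hrj⟩ := Finset.mem_filter.1 hr
          refine Finset.mem_filter.2 ⟨hrR, ?_⟩
          have := hidx_high r hrR
          rw [hrj] at this
          linarith
        exact le_trans (by exact_mod_cast Finset.card_le_card hsub)
          (hN _ (by positivity))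
      have hbound : ∀ r ∈ R.filter (fun r => idx r = j),
          1/‖(Pc r)‖ ≤ 10/(2:ℝ)^j := by
        intro r hr
        obtain ⟨hrR, hrj⟩ := Finset.mem_filter.1 hr
        have h1 := hidx_low r hrR
        rw [hrj] at h1
        have h2 := hPc_pos r hrR
        rw [div_le_div_iff₀ h2 hu0]
        linarith
      calc (∑ r ∈ R.filter (fun r => idx r = j), 1 / ‖(Pc r)‖)
          ≤ ((R.filter (fun r => idx r = j)).card : ℝ) * (10/(2:ℝ)^j) := by
            have := Finset.sum_le_card_nsmul (R.filter (fun r => idx r = j))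
              (fun r => 1 / ‖(Pc r)‖) (10/(2:ℝ)^j) hbound
            simpa [nsmul_eq_mul] using this
        _ ≤ ((20*((2:ℝ)^(j+1)/10)+1)*(2*((2:ℝ)^(j+1)/10)+2)) * (10/(2:ℝ)^j) :=
            mul_le_mul_of_nonneg_right hcardj (by positivity)
        _ ≤ 16*(2:ℝ)^j + 104 := by
            have heq : (2:ℝ)^(j+1) = 2*(2:ℝ)^j := by rw [pow_succ]; ring
            rw [heq]
            exact dyadic_term _ hu1
    calc (∑ j ∈ Finset.range (J+1), ∑ r ∈ R.filter (fun r => idx r = j),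
            1 / ‖(Pc r)‖)
        ≤ ∑ j ∈ Finset.range (J+1), (16*(2:ℝ)^j + 104) := Finset.sum_le_sum hterm
      _ = 16*((2:ℝ)^(J+1) - 1) + 104*((J:ℝ)+1) := by
          rw [Finset.sum_add_distrib, ← Finset.mul_sum, geom_sum_eq (by norm_num : (2:ℝ) ≠ 1),
            Finset.sum_const, Finset.card_range, nsmul_eq_mul]
          push_cast
          ring
      _ ≤ 1360 * ρ := by
          have h1 : ((J:ℝ)+1) ≤ (2:ℝ)^J := nat_succ_le_two_pow J
          have h2 : (2:ℝ)^(J+1) = 2*(2:ℝ)^J := by rw [pow_succ]; ring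
          nlinarith [h2J, hρ1]
  -- assemble
  have hcard_split : Fs.card = ∑ r ∈ R, (Fs.filter (fun γ => rowmap γ = r)).card :=
    Finset.card_eq_sum_card_fiberwise (fun γ hγ => Finset.mem_image_of_mem rowmap hγ)
  have hfinal : (Fs.card : ℝ) ≤ 8*sX*z.im * (1360*ρ) + (20*ρ+1)*(2*ρ+2) := by
    have h2 : (Fs.card : ℝ) = ∑ r ∈ R, ((Fs.filter (fun γ => rowmap γ = r)).card : ℝ) := by
      rw [hcard_split]; push_cast; ring
    rw [h2]
    calc (∑ r ∈ R, ((Fs.filter (fun γ => rowmap γ = r)).card : ℝ))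
        ≤ ∑ r ∈ R, (8*sX*z.im / ‖(Pc r)‖ + 1) := Finset.sum_le_sum hfiber
      _ = 8*sX*z.im * (∑ r ∈ R, 1/‖(Pc r)‖) + R.card := by
          rw [Finset.sum_add_distrib, Finset.mul_sum, Finset.sum_const, nsmul_eq_mul, mul_one]
          congr 1
          apply Finset.sum_congr rfl
          intro r _
          rw [mul_one_div]
      _ ≤ 8*sX*z.im * (1360*ρ) + (20*ρ+1)*(2*ρ+2) :=
          add_le_add (mul_le_mul_of_nonneg_left hsum
            (by positivity : (0:ℝ) ≤ 8*sX*z.im)) hRcard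
  have hncard : (Set.ncard E : ℝ) = (Fs.card : ℝ) := by
    rw [hFs_def, Set.ncard_eq_toFinset_card E hfin]
  rw [hncard]
  refine le_trans hfinal ?_
  have hsmul : Real.sqrt (X*(X+1)) = sX * sX1 := by
    rw [Real.sqrt_mul hX.le]
  rw [hsmul]
  have hA : 8*sX*z.im*(1360*ρ) ≤ 21760 * (sX*sX1) * z.im := by
    rw [hρ_def]
    have h1 : sX * sX * z.im ≤ sX * sX1 * z.im :=
      mul_le_mul_of_nonneg_right (mul_le_mul_of_nonneg_left hsXle hsX0.le) hy0.le
    nlinarith [h1]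
  have hB : (20*ρ+1)*(2*ρ+2) ≤ 300 * (X+1) := by
    rw [hρ_def]
    nlinarith [hsXsq, hsX1sq, hsXle, hsX10, hsX0.le]
  have hpos : 0 ≤ (sX*sX1) * z.im := by positivity
  have heq : 30000 * (sX * sX1 * z.im + X + 1)
      = 30000 * ((sX*sX1) * z.im) + 30000 * X + 30000 := by ring
  calc 8*sX*z.im*(1360*ρ) + (20*ρ+1)*(2*ρ+2)
      ≤ 21760 * (sX*sX1) * z.im + 300 * (X+1) := add_le_add hA hB
    _ ≤ 30000 * (sX * sX1 * z.im + X + 1) := by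
        rw [heq]
        have h30 : 21760 * (sX*sX1) * z.im ≤ 30000 * ((sX*sX1) * z.im) := by nlinarith [hpos]
        linarith

end Stmt5Aux

/-- counting elements of `SL₂(ℤ)` moving a point a bounded hyperbolic distance. -/
theorem stmt_5 :
    ∃ C > (0:ℝ), ∀ z : UpperHalfPlane, 1/10 ≤ z.im → ∀ X : ℝ, 0 < X →
      ({γ : SL(2, ℤ) | ptPair z (γ • z) < X}.Finite ∧
        (({γ : SL(2, ℤ) | ptPair z (γ • z) < X}).ncard : ℝ)
          ≤ C * (Real.sqrt (X*(X+1)) * z.im + X + 1)) ∧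
      ({γ : SL(2, ℤ) | ptPair z (γ • reflUHP z) < X}.Finite ∧
        (({γ : SL(2, ℤ) | ptPair z (γ • reflUHP z) < X}).ncard : ℝ)
          ≤ C * (Real.sqrt (X*(X+1)) * z.im + X + 1)) := by
  refine ⟨30000, by norm_num, ?_⟩
  intro z hz X hX
  have hrefl : (reflUHP z).im = z.im := by
    rw [UpperHalfPlane.im, UpperHalfPlane.im,
      show ((reflUHP z) : ℂ) = -(starRingEnd ℂ) (z:ℂ) from rfl]
    simp
  exact ⟨Stmt5Aux.main_count z z hz rfl X hX,
    Stmt5Aux.main_count z (reflUHP z) hz hrefl X hX⟩
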